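/- Let K be a finite abstract simplicial complex on a finite linearly ordered vertex set V, let m = |K| + 1 be the number of simplices of K counting the empty face, and let L_K be the language of K. Then the number of distinct nonempty left quotients u⁻¹L_K, taken over all words u ∈ List V, is at most m/2 + 1. (Equivalently: the minimal deterministic automaton recognizing L_K has at most m/2 + 1 states.) -/

import Mathlib

/-- An abstract simplicial complex on vertex type `V`, given as a finite
collection of nonempty finite subsets of `V` closed under taking nonempty subsets. -/
def IsSimplicialComplex {V : Type*} [DecidableEq V] (K : Finset (Finset V)) : Prop :=
  (∀ σ ∈ K, σ ≠ ∅) ∧ ∀ σ ∈ K, ∀ τ, τ ⊆ σ → τ ≠ ∅ → τ ∈ K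

/-- The language of a simplicial complex `K`: the empty list together with all
strictly increasing lists whose set of entries is a simplex of `K`. -/
def simplexLang {V : Type*} [LinearOrder V] (K : Finset (Finset V)) : Set (List V) :=
  {[]} ∪ {l | l.Pairwise (· < ·) ∧ l.toFinset ∈ K}

/-- The left quotient `u⁻¹L = {w | u ++ w ∈ L}`. -/
def leftQuot {V : Type*} (L : Set (List V)) (u : List V) : Set (List V) :=
  {w | u ++ w ∈ L}

/-- The set of distinct nonempty left quotients of a language `L`. -/
def nonemptyQuotients {V : Type*} (L : Set (List V)) : Set (Set (List V)) :=
  {S | S.Nonempty ∧ ∃ u : List V, S = leftQuot L u}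

section Aux

variable {V : Type*} [Fintype V] [LinearOrder V]

/-- Extension vertices of a simplex: vertices above everything in `σ` forming a simplex. -/
def ES (K : Finset (Finset V)) (σ : Finset V) : Finset V :=
  Finset.univ.filter (fun v => (∀ a ∈ σ, a < v) ∧ insert v σ ∈ K)

lemma mem_ES {K : Finset (Finset V)} {σ : Finset V} {v : V} :
    v ∈ ES K σ ↔ (∀ a ∈ σ, a < v) ∧ insert v σ ∈ K := by
  simp [ES]

/-- Quotient set determined by a simplex. -/
def QS (K : Finset (Finset V)) (σ : Finset V) : Set (List V) :=
  {w | w.Pairwise (· < ·) ∧ (∀ a ∈ σ, ∀ b ∈ w, a < b) ∧ σ ∪ w.toFinset ∈ K}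

lemma quot_eq {K : Finset (Finset V)} {u : List V} (hne : u ≠ [])
    (hus : u.Pairwise (· < ·)) (huK : u.toFinset ∈ K) :
    leftQuot (simplexLang K) u = QS K u.toFinset := by
  ext w
  simp only [leftQuot, simplexLang, QS, Set.mem_setOf_eq, Set.mem_union,
    Set.mem_singleton_iff]
  constructor
  · rintro (h | ⟨hs, hm⟩)
    · exact absurd h (by simp [hne])
    · rw [List.pairwise_append] at hs
      refine ⟨hs.2.1, ?_, ?_⟩
      · intro a ha b hb
        exact hs.2.2 a (List.mem_toFinset.mp ha) b hb
      · rwa [List.toFinset_append] at hm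
  · rintro ⟨hws, hlt, hmem⟩
    right
    refine ⟨?_, ?_⟩
    · rw [List.pairwise_append]
      exact ⟨hus, hws, fun a ha b hb => hlt a (List.mem_toFinset.mpr ha) b hb⟩
    · rwa [List.toFinset_append]

lemma QS_unext {K : Finset (Finset V)} (hK : IsSimplicialComplex K) {σ : Finset V}
    (hσ : σ ∈ K) (hext : ¬(ES K σ).Nonempty) : QS K σ = {[]} := by
  ext w
  simp only [Set.mem_singleton_iff]
  constructor
  · rintro ⟨hws, hlt, hmem⟩
    cases w with
    | nil => rfl
    | cons a t =>
      exfalso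
      apply hext
      refine ⟨a, mem_ES.mpr ⟨fun b hb => hlt b hb a (by simp), ?_⟩⟩
      apply hK.2 _ hmem
      · intro x hx
        rcases Finset.mem_insert.mp hx with rfl | hx
        · exact Finset.mem_union_right _ (by simp)
        · exact Finset.mem_union_left _ hx
      · exact Finset.insert_ne_empty _ _
  · rintro rfl
    exact ⟨List.Pairwise.nil, by simp, by simpa using hσ⟩

end Aux

theorem stmt4 {V : Type*} [Fintype V] [LinearOrder V]
    (K : Finset (Finset V)) (hK : IsSimplicialComplex K)
    (m : ℕ) (hm : m = K.card + 1) :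
    ((nonemptyQuotients (simplexLang K)).ncard : ℝ) ≤ (m : ℝ) / 2 + 1 := by
  classical
  subst hm
  by_cases hKe : K = ∅
  · -- empty complex: the language is {[]} and there is a single nonempty quotient
    subst hKe
    have hL : simplexLang (∅ : Finset (Finset V)) = {[]} := by
      ext l; simp [simplexLang]
    have hsub : nonemptyQuotients (simplexLang (∅ : Finset (Finset V))) ⊆
        {({[]} : Set (List V))} := by
      rintro S ⟨⟨w0, hw0⟩, u, rfl⟩
      have h0 : u ++ w0 ∈ simplexLang (∅ : Finset (Finset V)) := hw0
      rw [hL, Set.mem_singleton_iff, List.append_eq_nil_iff] at h0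
      obtain ⟨rfl, -⟩ := h0
      have : leftQuot (simplexLang (∅ : Finset (Finset V))) [] = {[]} := by
        ext w; simp [leftQuot, hL]
      simp [this]
    have h1 : (nonemptyQuotients (simplexLang (∅ : Finset (Finset V)))).ncard ≤ 1 := by
      simpa using Set.ncard_le_ncard hsub (Set.finite_singleton _)
    have h1' : ((nonemptyQuotients (simplexLang (∅ : Finset (Finset V)))).ncard : ℝ) ≤ 1 := by
      exact_mod_cast h1
    simp only [Finset.card_empty]
    push_cast
    linarith
  -- main case
  obtain ⟨τ0, hτ0⟩ := Finset.nonempty_of_ne_empty hKe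
  set E := K.filter (fun σ => (ES K σ).Nonempty) with hE
  set U := K.filter (fun σ => ¬(ES K σ).Nonempty) with hU
  have hcard : E.card + U.card = K.card := Finset.card_filter_add_card_filter_not _
  -- every nonempty quotient is L, {[]}, or QS of an extendable simplex
  have hsub : nonemptyQuotients (simplexLang K) ⊆
      insert (simplexLang K) (insert {[]} (QS K '' ↑E)) := by
    rintro S ⟨⟨w0, hw0⟩, u, rfl⟩
    by_cases hu : u = []
    · subst hu
      left
      ext w; simp [leftQuot]
    · have huL : u ++ w0 ∈ simplexLang K := hw0
      simp only [simplexLang, Set.mem_union, Set.mem_singleton_iff, Set.mem_setOf_eq] at huL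
      rcases huL with heq | ⟨hs, hm⟩
      · exact absurd heq (by simp [hu])
      · have hus : u.Pairwise (· < ·) := by
          rw [List.pairwise_append] at hs
          exact hs.1
        have hKu : u.toFinset ∈ K := by
          refine hK.2 _ hm u.toFinset ?_ ?_
          · rw [List.toFinset_append]; exact Finset.subset_union_left
          · cases u with
            | nil => exact absurd rfl hu
            | cons a t =>
              intro h
              have : a ∈ (a :: t).toFinset := by simp
              rw [h] at this
              exact absurd this (Finset.notMem_empty a)
        rw [quot_eq hu hus hKu]
        by_cases hext : (ES K u.toFinset).Nonempty
        · right; right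
          exact ⟨u.toFinset, by simp [hE, Finset.mem_filter, hKu, hext], rfl⟩
        · right; left
          exact QS_unext hK hKu hext
  -- cardinality bound from the subset
  have hn : (nonemptyQuotients (simplexLang K)).ncard ≤ E.card + 2 := by
    have hfin : (insert (simplexLang K) (insert {[]} (QS K '' ↑E))).Finite :=
      (((E.finite_toSet).image _).insert _).insert _
    have h1 := Set.ncard_le_ncard hsub hfin
    have h2 := Set.ncard_insert_le (simplexLang K) (insert {([] : List V)} (QS K '' ↑E))
    have h3 := Set.ncard_insert_le ({([] : List V)} : Set (List V)) (QS K '' ↑E)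
    have h4 := Set.ncard_image_le (f := QS K) E.finite_toSet
    rw [Set.ncard_coe_finset] at h4
    omega
  -- injection: extendable simplices (plus ∅) into unextendable ones
  have hEU : E.card + 1 ≤ U.card := by
    have hins : (∅ : Finset V) ∉ E := by
      intro h
      exact hK.1 _ (Finset.mem_filter.mp h).1 rfl
    have hEScard : ∀ σ ∈ insert (∅ : Finset V) E, (ES K σ).Nonempty := by
      intro σ hσ
      rcases Finset.mem_insert.mp hσ with rfl | hσ
      · obtain ⟨a, ha⟩ := Finset.nonempty_of_ne_empty (hK.1 _ hτ0)
        refine ⟨a, mem_ES.mpr ⟨by simp, ?_⟩⟩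
        have : ({a} : Finset V) ∈ K :=
          hK.2 _ hτ0 {a} (Finset.singleton_subset_iff.mpr ha) (Finset.singleton_ne_empty a)
        simpa using this
      · exact (Finset.mem_filter.mp hσ).2
    set f : Finset V → Finset V :=
      fun σ => if h : (ES K σ).Nonempty then insert ((ES K σ).max' h) σ else ∅ with hf
    have hfval : ∀ σ (h : (ES K σ).Nonempty), f σ = insert ((ES K σ).max' h) σ := by
      intro σ h; simp [hf, h]
    have hxmem : ∀ σ (h : (ES K σ).Nonempty),
        (∀ a ∈ σ, a < (ES K σ).max' h) ∧ insert ((ES K σ).max' h) σ ∈ K :=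
      fun σ h => mem_ES.mp (Finset.max'_mem _ h)
    have hfU : ∀ σ ∈ insert (∅ : Finset V) E, f σ ∈ U := by
      intro σ hσ
      have h := hEScard σ hσ
      set x := (ES K σ).max' h with hx
      rw [hfval σ h]
      refine Finset.mem_filter.mpr ⟨(hxmem σ h).2, ?_⟩
      rintro ⟨v, hv⟩
      obtain ⟨hv1, hv2⟩ := mem_ES.mp hv
      have hvES : v ∈ ES K σ := by
        refine mem_ES.mpr ⟨fun a ha => hv1 a (Finset.mem_insert_of_mem ha), ?_⟩
        refine hK.2 _ hv2 _ ?_ (Finset.insert_ne_empty _ _)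
        intro y hy
        rcases Finset.mem_insert.mp hy with rfl | hy
        · exact Finset.mem_insert_self _ _
        · exact Finset.mem_insert_of_mem (Finset.mem_insert_of_mem hy)
      have hle : v ≤ x := Finset.le_max' _ _ hvES
      have hlt : x < v := hv1 x (Finset.mem_insert_self _ _)
      exact absurd hle (not_le.mpr hlt)
    have hinj : Set.InjOn f ↑(insert (∅ : Finset V) E) := by
      intro σ1 h1 σ2 h2 heq
      have hn1 := hEScard σ1 (by exact_mod_cast h1)
      have hn2 := hEScard σ2 (by exact_mod_cast h2)
      set x1 := (ES K σ1).max' hn1 with hx1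
      set x2 := (ES K σ2).max' hn2 with hx2
      rw [hfval σ1 hn1, hfval σ2 hn2] at heq
      have hlt1 := (hxmem σ1 hn1).1
      have hlt2 := (hxmem σ2 hn2).1
      have hxx : x1 = x2 := by
        have m1 : x1 ∈ insert x2 σ2 := heq ▸ Finset.mem_insert_self x1 σ1
        have m2 : x2 ∈ insert x1 σ1 := heq ▸ Finset.mem_insert_self x2 σ2
        rcases Finset.mem_insert.mp m1 with h | h
        · exact h
        · rcases Finset.mem_insert.mp m2 with h' | h'
          · exact h'.symm
          · exact absurd (hlt1 x2 h') (not_lt.mpr (le_of_lt (hlt2 x1 h)))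
      have hnm1 : x1 ∉ σ1 := fun h => lt_irrefl x1 (hlt1 x1 h)
      have hnm2 : x2 ∉ σ2 := fun h => lt_irrefl x2 (hlt2 x2 h)
      calc σ1 = (insert x1 σ1).erase x1 := (Finset.erase_insert hnm1).symm
        _ = (insert x2 σ2).erase x2 := by rw [heq, hxx]
        _ = σ2 := Finset.erase_insert hnm2
    have hle := Finset.card_le_card_of_injOn f hfU hinj
    rw [Finset.card_insert_of_notMem hins] at hle
    omega
  -- conclude
  have h1 : ((nonemptyQuotients (simplexLang K)).ncard : ℝ) ≤ (E.card : ℝ) + 2 := by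
    exact_mod_cast hn
  have h2 : (E.card : ℝ) + 1 ≤ (U.card : ℝ) := by exact_mod_cast hEU
  have h3 : (E.card : ℝ) + (U.card : ℝ) = (K.card : ℝ) := by exact_mod_cast hcard
  push_cast
  linarith
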